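/- Let α be a nonzero algebraic number of degree k ≥ 2 and K the Galois closure of ℚ(α) with [K:ℚ] = d. If there is a positive integer q such that Tr_{K/ℚ}(α^j) ∈ (1/q)ℤ for all j = 1, 2, …, d + d·⌊log₂(q d)⌋ + 1, then α is an algebraic integer. -/

import Mathlib

open IsDedekindDomain IsDedekindDomain.HeightOneSpectrum NumberField Multiplicative Polynomial
open scoped WithZero

set_option maxHeartbeats 1000000
set_option synthInstance.maxHeartbeats 100000

section Helpers

lemma lt_coe_imp (x : ℤᵐ⁰) (b : ℤ) (h : x < (ofAdd b : Multiplicative ℤ)) :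
    x ≤ (ofAdd (b - 1) : Multiplicative ℤ) := by
  rcases eq_or_ne x 0 with rfl | hx
  · exact zero_le'
  · rcases WithZero.ne_zero_iff_exists.mp hx with ⟨y, rfl⟩
    rw [WithZero.coe_lt_coe] at h
    rw [WithZero.coe_le_coe]
    have h1 : toAdd y < b := h
    have h2 : toAdd y ≤ b - 1 := by omega
    exact h2

lemma val_prime_ge (K : Type*) [Field K] [NumberField K] (v : HeightOneSpectrum (𝓞 K)) :
    ∃ ℓ : ℕ, ℓ.Prime ∧ (∀ n : ℕ, ¬ ℓ ∣ n → (n : 𝓞 K) ∉ v.asIdeal) ∧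
    ((ofAdd (-(Module.finrank ℚ K : ℤ)) : Multiplicative ℤ) : ℤᵐ⁰)
      ≤ v.intValuation ((ringChar (𝓞 K ⧸ v.asIdeal) : 𝓞 K)) ∧
      ringChar (𝓞 K ⧸ v.asIdeal) = ℓ := by
  classical
  set D := Module.finrank ℚ K with hD
  haveI hmax : v.asIdeal.IsMaximal :=
    Ring.DimensionLEOne.maximalOfPrime v.ne_bot v.isPrime
  letI : Field (𝓞 K ⧸ v.asIdeal) := Ideal.Quotient.field v.asIdeal
  letI : Fintype (𝓞 K ⧸ v.asIdeal) := @Fintype.ofFinite _ (Ideal.finiteQuotientOfFreeOfNeBot v.asIdeal v.ne_bot)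
  set ℓ := ringChar (𝓞 K ⧸ v.asIdeal) with hl
  haveI : CharP (𝓞 K ⧸ v.asIdeal) ℓ := ringChar.charP _
  have hlprime : ℓ.Prime :=
    CharP.char_prime_of_ne_zero (𝓞 K ⧸ v.asIdeal) (CharP.char_ne_zero_of_finite (𝓞 K ⧸ v.asIdeal) ℓ)
  refine ⟨ℓ, hlprime, ?_, ?_, rfl⟩
  · intro n hn hmem
    have h0 : ((n : 𝓞 K) : 𝓞 K ⧸ v.asIdeal) = 0 := by
      rwa [Ideal.Quotient.eq_zero_iff_mem]
    rw [map_natCast] at h0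
    exact hn ((CharP.cast_eq_zero_iff (𝓞 K ⧸ v.asIdeal) ℓ n).mp h0)
  · by_contra hlt
    push_neg at hlt
    have hle : v.intValuation ((ℓ : 𝓞 K)) ≤ (ofAdd (-(D : ℤ) - 1) : Multiplicative ℤ) :=
      lt_coe_imp _ _ hlt
    have hdd : v.asIdeal ^ (D + 1) ∣ Ideal.span {(ℓ : 𝓞 K)} := by
      rw [← v.intValuation_le_pow_iff_dvd, intValuation_apply] at *
      convert hle using 2
      push_cast; ring_nf; rfl
    have hnormspan : Ideal.absNorm (Ideal.span {(ℓ : 𝓞 K)}) = ℓ ^ D := by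
      rw [Ideal.absNorm_span_singleton]
      have : ((ℓ : 𝓞 K)) = algebraMap ℤ (𝓞 K) (ℓ : ℤ) := by simp
      have hbn := Algebra.norm_algebraMap_of_basis (Module.Free.chooseBasis ℤ (𝓞 K)) (ℓ : ℤ)
      rw [this, hbn, ← Module.finrank_eq_card_chooseBasisIndex,
        NumberField.RingOfIntegers.rank, ← hD]
      simp [Int.natAbs_pow]
    have hnorm := map_dvd Ideal.absNorm hdd
    rw [map_pow, hnormspan] at hnorm
    obtain ⟨f, hf, hcard⟩ := FiniteField.card (𝓞 K ⧸ v.asIdeal) ℓ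
    have habs : Ideal.absNorm v.asIdeal = ℓ ^ (f : ℕ) := by
      rw [Ideal.absNorm_apply, Submodule.cardQuot_apply, ← hcard]
      exact Nat.card_eq_fintype_card
    rw [habs, ← pow_mul] at hnorm
    have hle2 : (f : ℕ) * (D + 1) ≤ D :=
      (Nat.pow_dvd_pow_iff_le_right hlprime.one_lt).mp hnorm
    have hf1 : 1 ≤ (f : ℕ) := f.one_le
    nlinarith [hf1, hle2]

lemma integral_of_val (K : Type*) [Field K] [NumberField K] (x : K)
    (h : ∀ v : HeightOneSpectrum (𝓞 K), v.valuation K x ≤ 1) : IsIntegral ℤ x := by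
  classical
  obtain ⟨a, s, rfl⟩ : ∃ (a : 𝓞 K) (s : nonZeroDivisors (𝓞 K)),
      IsLocalization.mk' K a s = x := by
    obtain ⟨⟨a, s⟩, hs⟩ := IsLocalization.mk'_surjective (nonZeroDivisors (𝓞 K)) x
    exact ⟨a, s, hs⟩
  rcases eq_or_ne a 0 with rfl | ha
  · rw [IsLocalization.mk'_zero]; exact isIntegral_zero
  have hs0 : (s : 𝓞 K) ≠ 0 := nonZeroDivisors.coe_ne_zero s
  have hspan_a : Ideal.span {a} ≠ (⊥ : Ideal (𝓞 K)) := by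
    simpa [Ideal.span_singleton_eq_bot] using ha
  have hspan_s : Ideal.span {(s : 𝓞 K)} ≠ (⊥ : Ideal (𝓞 K)) := by
    simpa [Ideal.span_singleton_eq_bot] using hs0
  have hdvd : Ideal.span {(s : 𝓞 K)} ∣ Ideal.span {a} := by
    rw [UniqueFactorizationMonoid.dvd_iff_normalizedFactors_le_normalizedFactors hspan_s hspan_a,
      Multiset.le_iff_count]
    intro J
    by_cases hJ : J ∈ UniqueFactorizationMonoid.normalizedFactors (Ideal.span {(s : 𝓞 K)})
    swap
    · simp [Multiset.count_eq_zero_of_notMem hJ]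
    have hJp : Prime J := UniqueFactorizationMonoid.prime_of_normalized_factor J hJ
    have hJbot : J ≠ ⊥ := hJp.ne_zero
    have hJprime : J.IsPrime := Ideal.isPrime_of_prime hJp
    set v : HeightOneSpectrum (𝓞 K) := ⟨J, hJprime, hJbot⟩ with hv
    have hval := h v
    rw [valuation_of_mk'] at hval
    have his : v.intValuation (s : 𝓞 K) ≠ 0 := by
      rw [intValuation_apply]; exact v.intValuation_ne_zero _ hs0
    have hle : v.intValuation a ≤ v.intValuation (s : 𝓞 K) := by
      rwa [div_le_one₀ (lt_of_le_of_ne zero_le' (Ne.symm his))] at hval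
    have hva : v.asIdeal = J := rfl
    rw [intValuation_apply, intValuation_apply, v.intValuationDef_if_neg ha,
      v.intValuationDef_if_neg hs0, WithZero.exp_eq_coe_ofAdd, WithZero.exp_eq_coe_ofAdd,
      WithZero.coe_le_coe, hva] at hle
    have hle2 := Multiplicative.ofAdd_le.mp hle
    have hle' : (Associates.mk J).count (Associates.mk (Ideal.span {(s : 𝓞 K)})).factors
        ≤ (Associates.mk J).count (Associates.mk (Ideal.span {a})).factors := by omega
    rw [← count_associates_factors_eq hspan_s hJprime hJbot,
      ← count_associates_factors_eq hspan_a hJprime hJbot]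
    exact hle'
  obtain ⟨c, hc⟩ := Ideal.span_singleton_le_span_singleton.mp (Ideal.le_of_dvd hdvd)
  have : IsLocalization.mk' K a s = algebraMap (𝓞 K) K c := by
    rw [IsLocalization.mk'_eq_iff_eq_mul, hc, map_mul]; ring
  rw [this]
  exact NumberField.RingOfIntegers.isIntegral_coe c

lemma val_natCast_ge (K : Type*) [Field K] [NumberField K] (v : HeightOneSpectrum (𝓞 K))
    (n : ℕ) (hn : 1 ≤ n) :
    ((ofAdd (-(Module.finrank ℚ K * Nat.log 2 n : ℤ)) : Multiplicative ℤ) : ℤᵐ⁰)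
      ≤ v.valuation K ((n : K)) := by
  obtain ⟨ℓ, hlp, hcop, hval, hchar⟩ := val_prime_ge K v
  rw [hchar] at hval
  set D := Module.finrank ℚ K with hD
  have main : ∀ n : ℕ, 1 ≤ n →
      ((ofAdd (-(D * Nat.log 2 n : ℤ)) : Multiplicative ℤ) : ℤᵐ⁰)
        ≤ v.intValuation ((n : 𝓞 K)) := by
    intro n
    induction n using Nat.strong_induction_on with
    | _ n ih =>
      intro hn
      by_cases hdvd : ℓ ∣ n
      · obtain ⟨n', rfl⟩ := hdvd
        have hn' : 1 ≤ n' := by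
          rcases Nat.eq_zero_or_pos n' with rfl | h; · simp at hn
          exact h
        have hlt : n' < ℓ * n' := by
          have := hlp.one_lt
          calc n' = 1 * n' := (one_mul n').symm
          _ < ℓ * n' := by exact (Nat.mul_lt_mul_right hn').mpr this
        have ihn := ih n' hlt hn'
        have hcast : ((ℓ * n' : ℕ) : 𝓞 K) = (ℓ : 𝓞 K) * (n' : 𝓞 K) := by push_cast; ring
        rw [hcast, Valuation.map_mul]
        have hmul := mul_le_mul' hval ihn
        refine le_trans ?_ hmul
        rw [← WithZero.coe_mul, WithZero.coe_le_coe, ← ofAdd_add, Multiplicative.ofAdd_le]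
        have hlog : Nat.log 2 n' + 1 ≤ Nat.log 2 (ℓ * n') := by
          have h2n : 2 * n' ≤ ℓ * n' := Nat.mul_le_mul_right n' hlp.two_le
          calc Nat.log 2 n' + 1 = Nat.log 2 (n' * 2) := by
                rw [Nat.log_mul_base (by norm_num) (by omega)]
          _ ≤ Nat.log 2 (ℓ * n') := Nat.log_mono_right (by omega)
        have : (D : ℤ) * Nat.log 2 (ℓ * n') ≥ D + D * Nat.log 2 n' := by
          have : (Nat.log 2 n' : ℤ) + 1 ≤ (Nat.log 2 (ℓ * n') : ℤ) := by exact_mod_cast hlog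
          nlinarith [Int.natCast_nonneg D]
        omega
      · have hnot : (n : 𝓞 K) ∉ v.asIdeal := hcop n hdvd
        have hne : v.intValuation ((n : 𝓞 K)) = 1 := by
          have hle1 := v.intValuation_le_one ((n : 𝓞 K))
          rcases lt_or_eq_of_le hle1 with hlt1 | he
          · exfalso
            rw [v.intValuation_lt_one_iff_dvd, Ideal.dvd_span_singleton] at hlt1
            exact hnot hlt1
          · exact he
        rw [hne]
        rw [← WithZero.coe_one, WithZero.coe_le_coe, ← ofAdd_zero, Multiplicative.ofAdd_le]
        have hpos : (0:ℤ) ≤ (D:ℤ) * (Nat.log 2 n : ℤ) := by positivity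
        omega
  have := main n hn
  have hcast : ((n : K)) = algebraMap (𝓞 K) K ((n : 𝓞 K)) := by push_cast; rfl
  rw [hcast, valuation_of_algebraMap]
  exact this

end Helpers


section Poly

variable {K : Type*} [Field K] {Γ : Type*} [LinearOrderedCommGroupWithZero Γ]
  {ι : Type*} [DecidableEq ι]

lemma coeff_prod_le (w : Valuation K Γ) (s : Finset ι) (f : ι → K)
    (hf : ∀ σ ∈ s, w (f σ) ≤ 1) (i : ℕ) :
    w ((∏ σ ∈ s, (X - C (f σ))).coeff i) ≤ 1 := by
  induction s using Finset.induction_on generalizing i with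
  | empty => rcases i with _ | i <;> simp [Polynomial.coeff_one, zero_le']
  | insert _ _ hτ ih =>
    rename_i τ s'
    rw [Finset.prod_insert hτ, sub_mul, coeff_sub]
    refine le_trans (w.map_sub _ _) (max_le ?_ ?_)
    · rcases i with _ | i
      · simp
      · rw [coeff_X_mul]
        exact ih (fun σ hσ => hf σ (Finset.mem_insert_of_mem hσ)) i
    · rw [coeff_C_mul, map_mul]
      calc w (f τ) * w ((∏ σ ∈ s', (X - C (f σ))).coeff i)
          ≤ 1 * 1 := mul_le_mul' (hf τ (Finset.mem_insert_self _ _))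
            (ih (fun σ hσ => hf σ (Finset.mem_insert_of_mem hσ)) i)
      _ = 1 := one_mul 1

lemma power_sum_rec (s : Finset ι) (f : ι → K) (r : ℕ) :
    ∑ i ∈ Finset.range (s.card + 1),
      (∏ σ ∈ s, (X - C (f σ))).coeff i * (∑ σ ∈ s, f σ ^ (r + i)) = 0 := by
  set P : K[X] := ∏ σ ∈ s, (X - C (f σ)) with hP
  have hPdeg : P.natDegree = s.card := by
    rw [hP, natDegree_prod_of_monic _ _ fun σ _ => monic_X_sub_C (f σ)]
    simp [natDegree_X_sub_C]
  have key : ∀ σ ∈ s, ∑ i ∈ Finset.range (s.card + 1), P.coeff i * f σ ^ (r + i)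
      = f σ ^ r * P.eval (f σ) := by
    intro σ hσ
    rw [eval_eq_sum_range, hPdeg, Finset.mul_sum]
    refine Finset.sum_congr rfl fun i _ => ?_
    rw [pow_add]; ring
  have heval : ∀ σ ∈ s, P.eval (f σ) = 0 := by
    intro σ hσ
    rw [hP, eval_prod]
    exact Finset.prod_eq_zero hσ (by simp)
  calc ∑ i ∈ Finset.range (s.card + 1), P.coeff i * (∑ σ ∈ s, f σ ^ (r + i))
      = ∑ i ∈ Finset.range (s.card + 1), ∑ σ ∈ s, P.coeff i * f σ ^ (r + i) := by
        exact Finset.sum_congr rfl fun i _ => Finset.mul_sum _ _ _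
  _ = ∑ σ ∈ s, ∑ i ∈ Finset.range (s.card + 1), P.coeff i * f σ ^ (r + i) :=
        Finset.sum_comm
  _ = 0 := by
        rw [Finset.sum_congr rfl key]
        refine Finset.sum_eq_zero fun σ hσ => ?_
        rw [heval σ hσ, mul_zero]

lemma power_sum_step (w : Valuation K Γ) (s : Finset ι) (f : ι → K)
    (hf : ∀ σ ∈ s, w (f σ) = 1) (y : K) (r : ℕ) (δ : Γ)
    (hδ : ∀ i, i < s.card → w ((∑ σ ∈ s, f σ ^ (r + (i + 1))) * y) ≤ δ) :
    w ((∑ σ ∈ s, f σ ^ r) * y) ≤ δ := by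
  set P : K[X] := ∏ σ ∈ s, (X - C (f σ)) with hP
  have hrec := power_sum_rec s f r
  rw [Finset.sum_range_succ'] at hrec
  have h0 : P.coeff 0 * ((∑ σ ∈ s, f σ ^ (r + 0)) * y)
      = -∑ i ∈ Finset.range s.card, P.coeff (i + 1) * ((∑ σ ∈ s, f σ ^ (r + (i + 1))) * y) := by
    have := congrArg (fun z => z * y) hrec
    simp only [add_mul, zero_mul, Finset.sum_mul] at this
    have h' : ∑ i ∈ Finset.range s.card, P.coeff (i + 1) * ((∑ σ ∈ s, f σ ^ (r + (i + 1))) * y)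
        + P.coeff 0 * ((∑ σ ∈ s, f σ ^ (r + 0)) * y) = 0 := by
      rw [← this]
      congr 1 <;> [skip; ring] <;> exact Finset.sum_congr rfl fun i _ => by ring
    linear_combination h'
  have hc0 : w (P.coeff 0) = 1 := by
    rw [coeff_zero_eq_eval_zero, hP, eval_prod, map_prod]
    refine Finset.prod_eq_one fun σ hσ => ?_
    simp only [eval_sub, eval_X, eval_C, zero_sub]
    rw [Valuation.map_neg]
    exact hf σ hσ
  have : w (P.coeff 0 * ((∑ σ ∈ s, f σ ^ (r + 0)) * y)) ≤ δ := by
    rw [h0, Valuation.map_neg]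
    refine Valuation.map_sum_le w fun i hi => ?_
    rw [map_mul]
    calc w (P.coeff (i + 1)) * w ((∑ σ ∈ s, f σ ^ (r + (i + 1))) * y)
        ≤ 1 * δ := mul_le_mul' (coeff_prod_le w s f (fun σ hσ => le_of_eq (hf σ hσ)) _)
          (hδ i (Finset.mem_range.mp hi))
    _ = δ := one_mul δ
  rw [map_mul, hc0, one_mul] at this
  simpa using this

end Poly

/-- Let `α` be a nonzero algebraic number of degree `k ≥ 2` and `K` the Galois closure
of `ℚ(α)`, of degree `d` over `ℚ`. If `Tr_{K/ℚ}(α^j) ∈ (1/q)ℤ` for some positive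
integer `q` and all `j = 1, …, d + d⌊log₂(qd)⌋ + 1`, then `α` is an algebraic
integer. -/
theorem trace_finite_criterion_q (K : Type*) [Field K] [NumberField K] (α : K)
    (hα : α ≠ 0) (k : ℕ) (hk : 2 ≤ k) (hdeg : (minpoly ℚ α).natDegree = k)
    [Polynomial.IsSplittingField ℚ K (minpoly ℚ α)]
    (d : ℕ) (hd : d = Module.finrank ℚ K)
    (q : ℕ) (hq : 0 < q)
    (h : ∀ j : ℕ, 1 ≤ j → j ≤ d + d * Nat.log 2 (q * d) + 1 →
      ∃ m : ℤ, Algebra.trace ℚ K (α ^ j) = (m : ℚ) / (q : ℚ)) :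
    IsIntegral ℤ α := by
  classical
  by_contra hni
  have hint : IsIntegral ℚ α := IsIntegral.of_finite ℚ α
  have hsep : (minpoly ℚ α).Separable := (minpoly.irreducible hint).separable
  haveI : IsGalois ℚ K := IsGalois.of_separable_splitting_field hsep
  obtain ⟨v, hv⟩ : ∃ v : HeightOneSpectrum (𝓞 K), ¬ v.valuation K α ≤ 1 := by
    by_contra hall
    push_neg at hall
    exact hni (integral_of_val K α hall)
  replace hv : 1 < v.valuation K α := lt_of_not_ge hv
  set w : Valuation K ℤᵐ⁰ := v.valuation K with hw
  set L := Nat.log 2 (q * d) with hL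
  set B := d * L with hB
  set N := d + d * L + 1 with hN
  have hd1 : 1 ≤ d := by rw [hd]; exact Module.finrank_pos
  have hcardG : Fintype.card (K ≃ₐ[ℚ] K) = d := by
    rw [hd, ← Nat.card_eq_fintype_card]; exact IsGalois.card_aut_eq_finrank ℚ K
  -- the trace sums
  have hsum : ∀ j : ℕ, algebraMap ℚ K (Algebra.trace ℚ K (α ^ j))
      = ∑ σ : K ≃ₐ[ℚ] K, (σ α) ^ j := by
    intro j
    rw [trace_eq_sum_automorphisms]
    exact Finset.sum_congr rfl fun σ _ => by rw [map_pow]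
  -- choose the maximizing automorphism
  obtain ⟨σ₀, -, hσ₀⟩ := Finset.exists_max_image (Finset.univ : Finset (K ≃ₐ[ℚ] K))
    (fun σ => w (σ α)) ⟨AlgEquiv.refl, Finset.mem_univ _⟩
  have hγ : 1 < w (σ₀ α) := by
    refine lt_of_lt_of_le hv ?_
    have := hσ₀ AlgEquiv.refl (Finset.mem_univ _)
    simpa using this
  have hγne : w (σ₀ α) ≠ 0 := by
    intro h0; rw [h0] at hγ; exact absurd hγ (by simp)
  obtain ⟨g, hg⟩ := WithZero.ne_zero_iff_exists.mp hγne
  set a : ℤ := toAdd g with ha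
  have ha1 : 1 ≤ a := by
    rw [← hg] at hγ
    have : (1 : Multiplicative ℤ) < g := by exact_mod_cast hγ
    have : (0:ℤ) < toAdd g := this
    omega
  set A : ℕ := a.toNat with hA
  have hAa : (A : ℤ) = a := Int.toNat_of_nonneg (by omega)
  have hA1 : 1 ≤ A := by omega
  obtain ⟨π, hπ⟩ := v.valuation_exists_uniformizer K
  have hπA : ∀ n : ℕ, w (π ^ n) = ((ofAdd (-(n:ℤ)) : Multiplicative ℤ) : ℤᵐ⁰) := by
    intro n
    rw [map_pow, hπ, WithZero.exp_eq_coe_ofAdd, ← WithZero.coe_pow]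
    congr 1
    rw [← ofAdd_nsmul]
    congr 1
    simp
  -- the set of maximizing automorphisms
  set S : Finset (K ≃ₐ[ℚ] K) :=
    Finset.univ.filter (fun σ : K ≃ₐ[ℚ] K => w (σ α) = w (σ₀ α)) with hS
  have hσ₀S : σ₀ ∈ S := by simp [hS]
  set c := S.card with hc
  have hc1 : 1 ≤ c := Finset.card_pos.mpr ⟨σ₀, hσ₀S⟩
  have hcd : c ≤ d := by
    rw [← hcardG, ← Finset.card_univ]
    exact Finset.card_le_card (Finset.filter_subset _ _)
  -- the normalized elements
  set u : (K ≃ₐ[ℚ] K) → K := fun σ => σ α * π ^ A with hu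
  have hu1 : ∀ σ ∈ S, w (u σ) = 1 := by
    intro σ hσ
    have hσval : w (σ α) = w (σ₀ α) := by
      simp only [hS, Finset.mem_filter] at hσ
      exact hσ.2
    rw [hu]
    simp only [map_mul, hσval, ← hg, hπA A]
    rw [← WithZero.coe_mul, ← WithZero.coe_one]
    congr 1
    rw [hAa]
    rw [← ofAdd_toAdd g, ← ofAdd_add]
    simp [ha]
  set T : ℕ → K := fun j => ∑ σ ∈ S, (u σ) ^ j with hT
  have hT0 : T 0 = (c : K) := by simp [hT, hc]
  set wq : ℤᵐ⁰ := w ((q : K)) with hwq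
  have hwq1 : wq ≤ 1 := by
    rw [hwq]
    have : ((q : K)) = algebraMap (𝓞 K) K ((q : 𝓞 K)) := by push_cast; rfl
    rw [hw, this]
    exact v.valuation_le_one _
  have hq0K : ((q : K)) ≠ 0 := Nat.cast_ne_zero.mpr (by omega)
  -- the trace bound
  have hTrace : ∀ j : ℕ, 1 ≤ j → j ≤ N → w (T j * (q : K)) ≤
      ((ofAdd (-(j:ℤ)) : Multiplicative ℤ) : ℤᵐ⁰) := by
    intro j hj1 hj2
    obtain ⟨m, hm⟩ := h j hj1 hj2
    set Su : K := ∑ σ : K ≃ₐ[ℚ] K, (σ α) ^ j with hSu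
    set Sc : K := ∑ σ ∈ Finset.univ.filter
      (fun σ : K ≃ₐ[ℚ] K => ¬ (w (σ α) = w (σ₀ α))), (σ α) ^ j with hSc
    have hsplit : (∑ σ ∈ S, (σ α) ^ j) = Su - Sc := by
      rw [eq_sub_iff_add_eq, hS, hSc]
      exact Finset.sum_filter_add_sum_filter_not _ _ _
    have hTj : T j = (Su - Sc) * π ^ (A * j) := by
      have hterm : ∀ σ ∈ S, (u σ) ^ j = σ α ^ j * π ^ (A * j) := by
        intro σ _
        show (σ α * π ^ A) ^ j = σ α ^ j * π ^ (A * j)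
        rw [mul_pow, ← pow_mul]
      calc T j = ∑ σ ∈ S, σ α ^ j * π ^ (A * j) := Finset.sum_congr rfl hterm
      _ = (∑ σ ∈ S, σ α ^ j) * π ^ (A * j) := (Finset.sum_mul _ _ _).symm
      _ = (Su - Sc) * π ^ (A * j) := by rw [hsplit]
    have hSuq : Su * (q : K) = ((m : ℤ) : K) := by
      have h1 := hsum j
      rw [hm] at h1
      rw [← hSu, ← h1] at *
      rw [← h1]
      have : ((q:K)) = algebraMap ℚ K ((q:ℚ)) := by push_cast; rfl
      rw [this, ← map_mul]
      have hqQ : ((q:ℚ)) ≠ 0 := by exact_mod_cast (by omega : q ≠ 0)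
      rw [show (m:ℚ)/(q:ℚ) * (q:ℚ) = (m:ℚ) by field_simp]
      exact map_intCast (algebraMap ℚ K) m
    have hwm : w (((m : ℤ) : K)) ≤ 1 := by
      have : (((m : ℤ) : K)) = algebraMap (𝓞 K) K ((m : 𝓞 K)) := by push_cast; rfl
      rw [hw, this]
      exact v.valuation_le_one _
    have hidentity : T j * (q : K) = π ^ (A * j) * (Su * (q:K)) - π ^ (A * j) * (Sc * (q:K)) := by
      rw [hTj]; ring
    rw [hidentity]
    refine le_trans (w.map_sub _ _) (max_le ?_ ?_)
    · rw [map_mul, hπA, hSuq]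
      calc (((ofAdd (-(A * j : ℕ):ℤ)) : Multiplicative ℤ) : ℤᵐ⁰) * w (((m : ℤ) : K))
          ≤ (((ofAdd (-(A * j : ℕ):ℤ)) : Multiplicative ℤ) : ℤᵐ⁰) * 1 := mul_le_mul' le_rfl hwm
      _ = (((ofAdd (-(A * j : ℕ):ℤ)) : Multiplicative ℤ) : ℤᵐ⁰) := mul_one _
      _ ≤ ((ofAdd (-(j:ℤ)) : Multiplicative ℤ) : ℤᵐ⁰) := by
            rw [WithZero.coe_le_coe, Multiplicative.ofAdd_le]
            push_cast
            nlinarith [hA1, hj1]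
    · rw [map_mul, hπA, map_mul]
      have hScb : w Sc ≤ ((ofAdd ((a - 1) * (j:ℤ)) : Multiplicative ℤ) : ℤᵐ⁰) := by
        rw [hSc]
        refine Valuation.map_sum_le w fun σ hσ => ?_
        rw [Finset.mem_filter] at hσ
        have hlt : w (σ α) < w (σ₀ α) :=
          lt_of_le_of_ne (hσ₀ σ (Finset.mem_univ σ)) hσ.2
        have hle : w (σ α) ≤ ((ofAdd (a - 1) : Multiplicative ℤ) : ℤᵐ⁰) := by
          refine lt_coe_imp _ a ?_
          rw [← hg] at hlt
          rw [ha, ofAdd_toAdd]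
          exact hlt
        rw [map_pow]
        calc w (σ α) ^ j ≤ (((ofAdd (a - 1) : Multiplicative ℤ) : ℤᵐ⁰)) ^ j :=
              pow_le_pow_left' hle j
        _ = ((ofAdd ((a - 1) * (j:ℤ)) : Multiplicative ℤ) : ℤᵐ⁰) := by
              rw [← WithZero.coe_pow]
              congr 1
              rw [← ofAdd_nsmul]
              congr 1
              push_cast; ring
      calc (((ofAdd (-(A * j : ℕ):ℤ)) : Multiplicative ℤ) : ℤᵐ⁰) * (w Sc * wq)
          ≤ (((ofAdd (-(A * j : ℕ):ℤ)) : Multiplicative ℤ) : ℤᵐ⁰) *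
            (((ofAdd ((a - 1) * (j:ℤ)) : Multiplicative ℤ) : ℤᵐ⁰) * 1) :=
            mul_le_mul' le_rfl (mul_le_mul' hScb hwq1)
      _ = (((ofAdd ((-(A * j : ℕ):ℤ) + (a-1) * (j:ℤ))) : Multiplicative ℤ) : ℤᵐ⁰) := by
            rw [mul_one, ← WithZero.coe_mul, ← ofAdd_add]
      _ ≤ ((ofAdd (-(j:ℤ)) : Multiplicative ℤ) : ℤᵐ⁰) := by
            rw [WithZero.coe_le_coe, Multiplicative.ofAdd_le]
            push_cast [hAa]
            nlinarith [ha1, hj1]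
  -- downward induction
  have hNwin : B + c ≤ N := by rw [hN, hB]; omega
  have hdown : ∀ n r : ℕ, B + c ≤ r + n → r ≤ B + c →
      w (T r * (q : K)) ≤ ((ofAdd (-(B:ℤ) - 1) : Multiplicative ℤ) : ℤᵐ⁰) := by
    intro n
    induction n with
    | zero =>
      intro r h1 h2
      have hr : r = B + c := by omega
      have hb := hTrace r (by omega) (by omega)
      refine le_trans hb ?_
      rw [WithZero.coe_le_coe, Multiplicative.ofAdd_le]
      have : (B:ℤ) + 1 ≤ (r:ℤ) := by exact_mod_cast (by omega : B + 1 ≤ r)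
      omega
    | succ n ih =>
      intro r h1 h2
      by_cases hr : B + 1 ≤ r
      · have hb := hTrace r (by omega) (by omega)
        refine le_trans hb ?_
        rw [WithZero.coe_le_coe, Multiplicative.ofAdd_le]
        have : (B:ℤ) + 1 ≤ (r:ℤ) := by exact_mod_cast hr
        omega
      · have hstep := power_sum_step w S u (fun σ hσ => hu1 σ hσ) ((q : K)) r
          (((ofAdd (-(B:ℤ) - 1) : Multiplicative ℤ) : ℤᵐ⁰))
        refine hstep ?_
        intro i hi
        exact ih (r + (i + 1)) (by omega) (by rw [← hc] at hi; omega)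
  have hfinal := hdown (B + c) 0 (by omega) (by omega)
  rw [hT0] at hfinal
  have hcqK : ((c:K)) * ((q:K)) = (((c * q : ℕ) : K)) := by push_cast; ring
  rw [hcqK] at hfinal
  have hlow := val_natCast_ge K v (c * q) (Nat.mul_pos hc1 hq)
  rw [← hd, ← hw] at hlow
  have hlog : Nat.log 2 (c * q) ≤ L := by
    rw [hL]
    exact Nat.log_mono_right (by nlinarith)
  have hchain : ((ofAdd (-(B:ℤ)) : Multiplicative ℤ) : ℤᵐ⁰) ≤ w (((c * q : ℕ) : K)) := by
    refine le_trans ?_ hlow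
    rw [WithZero.coe_le_coe, Multiplicative.ofAdd_le, hB]
    have : (d:ℤ) * (Nat.log 2 (c*q) : ℤ) ≤ (d:ℤ) * (L:ℤ) := by
      have := hlog
      have hd0 : (0:ℤ) ≤ d := by positivity
      nlinarith [this]
    push_cast
    omega
  have : ((ofAdd (-(B:ℤ)) : Multiplicative ℤ) : ℤᵐ⁰) ≤
      ((ofAdd (-(B:ℤ) - 1) : Multiplicative ℤ) : ℤᵐ⁰) := le_trans hchain hfinal
  rw [WithZero.coe_le_coe, Multiplicative.ofAdd_le] at this
  omega
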